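/- Let F be a σ-subalgebra of Σ, R = P restricted to F, and {P_ω}_{ω∈Ω} a subfield regular conditional probability for P over R (i.e., ω ↦ P_ω(E) is F-measurable and ∫_F P_ω(E) R(dω) = P(E∩F) for all F∈F, E∈Σ). Let (W_n)_{n∈ℕ} be real random variables and (K(ω))_{ω∈Ω} a family of Borel probability distributions given by an F-measurable kernel. Then (W_n) is P-conditionally i.i.d. over F with conditional distribution K(id_Ω), if and only if for R-almost all ω∈Ω the sequence (W_n) is i.i.d. under P_ω with common distribution K(ω). -/

import Mathlib

open MeasureTheory Set

open scoped ENNReal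

lemma meas_toReal' {α : Type*} {m : MeasurableSpace α} {f : α → ℝ≥0∞} (hf : Measurable[m] f) :
    Measurable[m] fun x => (f x).toReal := hf.ennreal_toReal

lemma meas_sm' {α : Type*} {m : MeasurableSpace α} {f : α → ℝ} (hf : Measurable[m] f) :
    StronglyMeasurable[m] f := hf.stronglyMeasurable

lemma meas_prod' {α : Type*} {n : ℕ} {m : MeasurableSpace α} {f : Fin n → α → ℝ}
    (hf : ∀ j, Measurable[m] (f j)) : Measurable[m] fun x => ∏ j, f j x :=
  Finset.measurable_prod _ fun j _ => hf j

lemma trim_prob {Ω : Type*} (m : MeasurableSpace Ω) [mΩ : MeasurableSpace Ω]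
    (P : Measure Ω) [IsProbabilityMeasure P]
    (hm : m ≤ mΩ) : IsProbabilityMeasure (P.trim hm) :=
  ⟨by rw [trim_measurableSet_eq hm MeasurableSet.univ]; exact measure_univ⟩

/-- Conditional independence of a family of measurable maps over a σ-algebra `F`. -/
def CondIndepFam {Ω Y I : Type*} (mΩ : MeasurableSpace Ω) (mY : MeasurableSpace Y)
    (P : Measure Ω) (F : MeasurableSpace Ω) (X : I → Ω → Y) : Prop :=
  ∀ (n : ℕ) (idx : Fin n → I), Function.Injective idx →
    ∀ E : Fin n → Set Ω,
      (∀ j, MeasurableSet[MeasurableSpace.comap (X (idx j)) mY] (E j)) →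
      P[Set.indicator (⋂ j, E j) (fun _ => (1 : ℝ)) | F]
        =ᵐ[P] fun ω => ∏ j, (P[Set.indicator (E j) (fun _ => (1 : ℝ)) | F]) ω

lemma condexp_indicator_eq_pd {Ω : Type*} (m : MeasurableSpace Ω) [mΩ : MeasurableSpace Ω]
    (P : Measure Ω) [IsProbabilityMeasure P]
    (hm : m ≤ mΩ)
    (Pd : Ω → @Measure Ω mΩ) (hPdprob : ∀ ω, IsProbabilityMeasure (Pd ω))
    (hPdmeas : ∀ E : Set Ω, MeasurableSet[mΩ] E → Measurable[m] fun ω => Pd ω E)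
    (hPdint : ∀ (E F : Set Ω), MeasurableSet[mΩ] E → MeasurableSet[m] F →
      ∫⁻ ω in F, Pd ω E ∂(P.trim hm) = P (E ∩ F))
    (E : Set Ω) (hE : MeasurableSet[mΩ] E) :
    P[E.indicator (fun _ => (1 : ℝ)) | m] =ᵐ[P] fun ω => (Pd ω E).toReal := by
  haveI : IsProbabilityMeasure (P.trim hm) := trim_prob m P hm
  have hgm : Measurable[m] fun ω => (Pd ω E).toReal := meas_toReal' (hPdmeas E hE)
  have hgmΩ : Measurable[mΩ] fun ω => (Pd ω E).toReal := hgm.mono hm le_rfl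
  have hle1 : ∀ ω, ((Pd ω E).toReal : ℝ) ≤ 1 := fun ω => by
    haveI := hPdprob ω
    calc (Pd ω E).toReal ≤ (1 : ℝ≥0∞).toReal :=
          ENNReal.toReal_mono ENNReal.one_ne_top prob_le_one
      _ = 1 := by simp
  have hint : Integrable (fun ω => (Pd ω E).toReal) P := by
    refine (integrable_const (1 : ℝ)).mono' hgmΩ.aestronglyMeasurable ?_
    refine Filter.Eventually.of_forall fun ω => ?_
    rw [Real.norm_eq_abs, abs_of_nonneg ENNReal.toReal_nonneg]
    exact hle1 ω
  have hf : Integrable (E.indicator fun _ => (1 : ℝ)) P := (integrable_const (1 : ℝ)).indicator hE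
  refine (ae_eq_condExp_of_forall_setIntegral_eq hm hf
    (fun s _ _ => hint.integrableOn) (fun s hs _ => ?_)
    (meas_sm' hgm).aestronglyMeasurable).symm
  have hL : ∫ x in s, (Pd x E).toReal ∂P = (P (E ∩ s)).toReal := by
    rw [setIntegral_trim hm (meas_sm' hgm) hs,
      integral_toReal ((hPdmeas E hE).aemeasurable.restrict)
        (Filter.Eventually.of_forall fun ω => by
          haveI := hPdprob ω
          exact lt_of_le_of_lt prob_le_one ENNReal.one_lt_top),
      hPdint E s hE hs]
  have hR : ∫ x in s, E.indicator (fun _ => (1 : ℝ)) x ∂P = (P (E ∩ s)).toReal := by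
    have h1 : ∫ x, E.indicator (fun _ => (1 : ℝ)) x ∂(P.restrict s)
        = ∫ x in E, (1 : ℝ) ∂(P.restrict s) := integral_indicator hE
    rw [h1, Measure.restrict_restrict hE, setIntegral_const, smul_eq_mul, mul_one, measureReal_def]
  rw [hL, hR]

theorem main_aux
    {Ω : Type*} (m : MeasurableSpace Ω) [mΩ : MeasurableSpace Ω]
    (P : Measure Ω) [IsProbabilityMeasure P]
    (hm : m ≤ mΩ)
    (Pd : Ω → @Measure Ω mΩ) (hPdprob : ∀ ω, IsProbabilityMeasure (Pd ω))
    (hPdmeas : ∀ E : Set Ω, MeasurableSet[mΩ] E → Measurable[m] fun ω => Pd ω E)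
    (hPdint : ∀ (E F : Set Ω), MeasurableSet[mΩ] E → MeasurableSet[m] F →
      ∫⁻ ω in F, Pd ω E ∂(P.trim hm) = P (E ∩ F))
    (W : ℕ → Ω → ℝ) (hW : ∀ n, Measurable[mΩ] (W n))
    (K : Ω → Measure ℝ) (hKprob : ∀ ω, IsProbabilityMeasure (K ω))
    (hKmeas : ∀ B : Set ℝ, MeasurableSet B → Measurable[m] fun ω => K ω B) :
    (CondIndepFam mΩ (inferInstance : MeasurableSpace ℝ) P m W ∧
        (∀ n n' : ℕ, ∀ F : Set Ω, MeasurableSet[m] F → ∀ B : Set ℝ, MeasurableSet B →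
          P (F ∩ W n ⁻¹' B) = P (F ∩ W n' ⁻¹' B)) ∧
        ∀ (n : ℕ) (B : Set ℝ), MeasurableSet B →
          (fun ω => (K ω B).toReal)
            =ᵐ[P] P[(W n ⁻¹' B).indicator (fun _ => (1 : ℝ)) | m]) ↔
      (∀ᵐ ω ∂(P.trim hm),
        ProbabilityTheory.iIndepFun W (Pd ω) ∧
          ∀ n : ℕ, @Measure.map Ω ℝ mΩ (inferInstance) (W n) (Pd ω) = K ω) := by
  haveI hPR : IsProbabilityMeasure (P.trim hm) := trim_prob m P hm
  have hcond := condexp_indicator_eq_pd m P hm Pd hPdprob hPdmeas hPdint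
  constructor
  · rintro ⟨hCI, hId, hK⟩
    -- Step A : finite products over rational rays
    have hA : ∀ (n : ℕ) (idx : Fin n → ℕ) (q : Fin n → ℚ), ∀ᵐ ω ∂(P.trim hm),
        Function.Injective idx →
          Pd ω (⋂ j, W (idx j) ⁻¹' Iic ((q j : ℝ)))
            = ∏ j, Pd ω (W (idx j) ⁻¹' Iic ((q j : ℝ))) := by
      intro n idx q
      by_cases hinj : Function.Injective idx
      swap
      · exact Filter.Eventually.of_forall fun ω h => absurd h hinj
      have hEm : ∀ j : Fin n, MeasurableSet[mΩ] (W (idx j) ⁻¹' Iic ((q j : ℝ))) :=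
        fun j => (hW (idx j)) measurableSet_Iic
      have hIm : MeasurableSet[mΩ] (⋂ j, W (idx j) ⁻¹' Iic ((q j : ℝ))) :=
        MeasurableSet.iInter hEm
      have h1 := hCI n idx hinj (fun j => W (idx j) ⁻¹' Iic ((q j : ℝ)))
        (fun j => ⟨Iic ((q j : ℝ)), measurableSet_Iic, rfl⟩)
      have h2 : ∀ᵐ ω ∂P, ∀ j : Fin n,
          (P[(W (idx j) ⁻¹' Iic ((q j : ℝ))).indicator (fun _ => (1 : ℝ)) | m]) ω
            = (Pd ω (W (idx j) ⁻¹' Iic ((q j : ℝ)))).toReal :=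
        ae_all_iff.2 fun j => hcond _ (hEm j)
      have h3 : (fun ω => (Pd ω (⋂ j, W (idx j) ⁻¹' Iic ((q j : ℝ)))).toReal)
          =ᵐ[P] fun ω => ∏ j, (Pd ω (W (idx j) ⁻¹' Iic ((q j : ℝ)))).toReal := by
        filter_upwards [h1, h2, hcond _ hIm] with ω hω1 hω2 hω3
        rw [← hω3, hω1]
        exact Finset.prod_congr rfl fun j _ => hω2 j
      have h4 := (StronglyMeasurable.ae_eq_trim_iff hm (meas_sm' (meas_toReal' (hPdmeas _ hIm)))
        (meas_sm' (meas_prod' fun j => meas_toReal' (hPdmeas _ (hEm j))))).mpr h3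
      filter_upwards [h4] with ω hω _
      haveI := hPdprob ω
      refine (ENNReal.toReal_eq_toReal_iff' (measure_ne_top _ _)
        (ENNReal.prod_lt_top fun j _ => measure_lt_top _ _).ne).1 ?_
      rw [hω, ENNReal.toReal_prod]
    -- Step B : identification of the one-dimensional distributions
    have hB : ∀ (n : ℕ) (q : ℚ), ∀ᵐ ω ∂(P.trim hm),
        K ω (Iic ((q : ℝ))) = Pd ω (W n ⁻¹' Iic ((q : ℝ))) := by
      intro n q
      have h1 := (hK n (Iic ((q : ℝ))) measurableSet_Iic).trans
        (hcond _ ((hW n) measurableSet_Iic))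
      have h2 := (StronglyMeasurable.ae_eq_trim_iff hm (meas_sm' (meas_toReal' (hKmeas _ measurableSet_Iic)))
        (meas_sm' (meas_toReal' (hPdmeas _ ((hW n) measurableSet_Iic))))).mpr h1
      filter_upwards [h2] with ω hω
      haveI := hPdprob ω; haveI := hKprob ω
      exact (ENNReal.toReal_eq_toReal_iff' (measure_ne_top _ _) (measure_ne_top _ _)).1 hω
    have hAll : ∀ᵐ ω ∂(P.trim hm),
        (∀ (n : ℕ) (idx : Fin n → ℕ) (q : Fin n → ℚ), Function.Injective idx →
          Pd ω (⋂ j, W (idx j) ⁻¹' Iic ((q j : ℝ)))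
            = ∏ j, Pd ω (W (idx j) ⁻¹' Iic ((q j : ℝ)))) ∧
        (∀ (n : ℕ) (q : ℚ), K ω (Iic ((q : ℝ))) = Pd ω (W n ⁻¹' Iic ((q : ℝ)))) := by
      refine Filter.Eventually.and ?_ ?_
      · rw [ae_all_iff]; intro n
        rw [ae_all_iff]; intro idx
        rw [ae_all_iff]; intro q
        exact hA n idx q
      · rw [ae_all_iff]; intro n
        rw [ae_all_iff]; intro q
        exact hB n q
    filter_upwards [hAll] with ω hω
    obtain ⟨h1, h2⟩ := hω
    haveI := hPdprob ω; haveI := hKprob ω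
    constructor
    · -- independence
      rw [ProbabilityTheory.iIndepFun_iff_iIndep]
      refine ProbabilityTheory.iIndepSets.iIndep
        (m := fun i => MeasurableSpace.comap (W i) (inferInstance : MeasurableSpace ℝ))
        (fun i => (hW i).comap_le)
        (fun i => preimage (W i) '' (⋃ q : ℚ, {Iic ((q : ℝ))})) (fun i => ?_) (fun i => ?_) ?_
      · exact Real.isPiSystem_Iic_rat.comap (W i)
      · show MeasurableSpace.comap (W i) (inferInstance : MeasurableSpace ℝ)
            = MeasurableSpace.generateFrom (preimage (W i) '' ⋃ q : ℚ, {Iic ((q : ℝ))})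
        rw [show (inferInstance : MeasurableSpace ℝ) = borel ℝ from BorelSpace.measurable_eq,
          Real.borel_eq_generateFrom_Iic_rat]
        exact MeasurableSpace.comap_generateFrom
      · rw [ProbabilityTheory.iIndepSets_iff]
        intro s f hf
        classical
        have hchoose : ∀ i, ∃ qq : ℚ, i ∈ s → f i = W i ⁻¹' Iic ((qq : ℝ)) := by
          intro i
          by_cases hi : i ∈ s
          · obtain ⟨t, ht, hft⟩ := hf i hi
            rw [mem_iUnion] at ht
            obtain ⟨qq, hqq⟩ := ht
            rw [mem_singleton_iff] at hqq
            subst hqq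
            exact ⟨qq, fun _ => hft.symm⟩
          · exact ⟨0, fun h => absurd h hi⟩
        choose qq hqq using hchoose
        set σ := s.orderIsoOfFin rfl with hσ
        set idx : Fin s.card → ℕ := fun j => (σ j : ℕ) with hidx
        have hinj : Function.Injective idx := fun a b h => σ.injective (Subtype.ext h)
        have hmem : ∀ j, idx j ∈ s := fun j => (σ j).2
        have hiInter : (⋂ i ∈ s, f i) = ⋂ j, W (idx j) ⁻¹' Iic ((qq (idx j) : ℝ)) := by
          ext x
          simp only [mem_iInter]
          constructor
          · intro h j
            have := h (idx j) (hmem j)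
            rwa [hqq (idx j) (hmem j)] at this
          · intro h i hi
            obtain ⟨j, hj⟩ := σ.surjective ⟨i, hi⟩
            have hji : idx j = i := congrArg Subtype.val hj
            rw [hqq i hi, ← hji]
            exact h j
        have hprod : (∏ i ∈ s, Pd ω (f i))
            = ∏ j, Pd ω (W (idx j) ⁻¹' Iic ((qq (idx j) : ℝ))) := by
          rw [← Finset.prod_coe_sort s (fun i => Pd ω (f i)),
            ← Equiv.prod_comp σ.toEquiv (fun i : s => Pd ω (f (i : ℕ)))]
          exact Finset.prod_congr rfl fun j _ => congrArg (Pd ω) (hqq (idx j) (hmem j))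
        rw [hiInter, hprod]
        exact h1 s.card idx (fun j => qq (idx j)) hinj
    · -- distributions
      intro n
      haveI : IsProbabilityMeasure ((Pd ω).map (W n)) :=
        Measure.isProbabilityMeasure_map (hW n).aemeasurable
      refine ext_of_generate_finite (⋃ q : ℚ, {Iic ((q : ℝ))})
        (by rw [show (inferInstance : MeasurableSpace ℝ) = borel ℝ from BorelSpace.measurable_eq]
            exact Real.borel_eq_generateFrom_Iic_rat)
        Real.isPiSystem_Iic_rat ?_ ?_
      · intro t ht
        rw [mem_iUnion] at ht
        obtain ⟨q, hq⟩ := ht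
        rw [mem_singleton_iff] at hq
        subst hq
        rw [Measure.map_apply (hW n) measurableSet_Iic]
        exact (h2 n q).symm
      · rw [Measure.map_apply (hW n) MeasurableSet.univ, preimage_univ]
        simp [measure_univ]
  · intro hae
    have haeP : ∀ᵐ ω ∂P,
        ProbabilityTheory.iIndepFun W (Pd ω) ∧
          ∀ n : ℕ, @Measure.map Ω ℝ mΩ (inferInstance) (W n) (Pd ω) = K ω := by
      rw [ae_iff] at hae ⊢
      exact le_antisymm (le_trans (le_trim hm) hae.le) (zero_le)
    refine ⟨?_, ?_, ?_⟩
    · -- conditional independence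
      intro n idx hinj E hE
      have hE' := hE
      choose B hB hBE using hE'
      have hEm : ∀ j, MeasurableSet[mΩ] (E j) := fun j => hBE j ▸ (hW (idx j)) (hB j)
      have hface : ∀ᵐ ω ∂P, ∀ j,
          (P[(E j).indicator (fun _ => (1 : ℝ)) | m]) ω = (Pd ω (E j)).toReal :=
        ae_all_iff.2 fun j => hcond _ (hEm j)
      refine (hcond _ (MeasurableSet.iInter hEm)).trans ?_
      filter_upwards [haeP, hface] with ω hω hfa
      haveI := hPdprob ω
      classical
      have hmeaseq : Pd ω (⋂ j, E j) = ∏ j, Pd ω (E j) := by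
        set sets : ℕ → Set Ω := fun i => ⋂ j, ⋂ (_ : idx j = i), E j with hsets
        have hsets_eq : ∀ j0, sets (idx j0) = E j0 := by
          intro j0
          apply subset_antisymm
          · exact iInter_subset_of_subset j0 (by simp)
          · intro x hx
            simp only [hsets, mem_iInter]
            intro j hj
            cases hinj hj
            exact hx
        have hS := hω.1.meas_biInter (S := Finset.image idx Finset.univ) (s := sets) ?_
        · have e1 : (⋂ i ∈ Finset.image idx Finset.univ, sets i) = ⋂ j, E j := by
            ext x
            simp only [mem_iInter, Finset.mem_image, Finset.mem_univ, true_and]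
            constructor
            · intro h j
              have := h (idx j) ⟨j, rfl⟩
              rwa [hsets_eq j] at this
            · intro h i hi
              obtain ⟨j, rfl⟩ := hi
              rw [hsets_eq j]
              exact h j
          have e2 : (∏ i ∈ Finset.image idx Finset.univ, Pd ω (sets i)) = ∏ j, Pd ω (E j) := by
            rw [Finset.prod_image (fun a _ b _ h => hinj h)]
            exact Finset.prod_congr rfl fun j _ => by rw [hsets_eq j]
          rw [← e1, ← e2]
          exact hS
        · intro i hi
          rw [Finset.mem_image] at hi
          obtain ⟨j, _, rfl⟩ := hi
          rw [hsets_eq j]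
          exact hE j
      rw [hmeaseq, ENNReal.toReal_prod]
      exact Finset.prod_congr rfl fun j _ => (hfa j).symm
    · -- identical distribution
      intro n n' F hF B hB
      have e : ∀ k : ℕ, P (F ∩ W k ⁻¹' B) = ∫⁻ ω in F, Pd ω (W k ⁻¹' B) ∂(P.trim hm) := by
        intro k
        rw [inter_comm]
        exact (hPdint _ F ((hW k) hB) hF).symm
      rw [e n, e n']
      refine lintegral_congr_ae (ae_restrict_of_ae ?_)
      filter_upwards [hae] with ω hω
      rw [← Measure.map_apply (hW n) hB, ← Measure.map_apply (hW n') hB, hω.2 n, hω.2 n']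
    · -- conditional distributions
      intro n B hB
      refine Filter.EventuallyEq.trans ?_ (hcond _ ((hW n) hB)).symm
      filter_upwards [haeP] with ω hω
      rw [← hω.2 n, Measure.map_apply (hW n) hB]

/-- Given a subfield regular conditional probability `{P_ω}` for `P`
over `R = P|F`, the sequence `(W_n)` is `P`-conditionally i.i.d. over `F` with
conditional distribution `K(id)` iff for `R`-almost all `ω` the sequence `(W_n)` is
i.i.d. under `P_ω` with common distribution `K(ω)`. -/
theorem subfield_rcp_mixedRenewal_iff
    {Ω : Type*} [mΩ : MeasurableSpace Ω]
    (P : Measure Ω) [IsProbabilityMeasure P]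
    (m : MeasurableSpace Ω) (hm : m ≤ mΩ)
    (Pd : Ω → @Measure Ω mΩ) (hPdprob : ∀ ω, IsProbabilityMeasure (Pd ω))
    (hPdmeas : ∀ E : Set Ω, MeasurableSet[mΩ] E → Measurable[m] fun ω => Pd ω E)
    (hPdint : ∀ (E F : Set Ω), MeasurableSet[mΩ] E → MeasurableSet[m] F →
      ∫⁻ ω in F, Pd ω E ∂(P.trim hm) = P (E ∩ F))
    (W : ℕ → Ω → ℝ) (hW : ∀ n, Measurable[mΩ] (W n))
    (K : Ω → Measure ℝ) (hKprob : ∀ ω, IsProbabilityMeasure (K ω))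
    (hKmeas : ∀ B : Set ℝ, MeasurableSet B → Measurable[m] fun ω => K ω B) :
    (CondIndepFam mΩ (inferInstance : MeasurableSpace ℝ) P m W ∧
        (∀ n n' : ℕ, ∀ F : Set Ω, MeasurableSet[m] F → ∀ B : Set ℝ, MeasurableSet B →
          P (F ∩ W n ⁻¹' B) = P (F ∩ W n' ⁻¹' B)) ∧
        ∀ (n : ℕ) (B : Set ℝ), MeasurableSet B →
          (fun ω => (K ω B).toReal)
            =ᵐ[P] P[(W n ⁻¹' B).indicator (fun _ => (1 : ℝ)) | m]) ↔
      (∀ᵐ ω ∂(P.trim hm),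
        ProbabilityTheory.iIndepFun W (Pd ω) ∧
          ∀ n : ℕ, @Measure.map Ω ℝ mΩ (inferInstance) (W n) (Pd ω) = K ω) := by
  exact main_aux (mΩ := mΩ) m P hm Pd hPdprob hPdmeas hPdint W hW K hKprob hKmeas
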